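/- Let U ⊆ ℝ be open, u : U → ℂ differentiable, l₁, λ ∈ ℂ, and let ψ : U → ℂ be three times differentiable with ψ(x) ≠ 0 for all x ∈ U and −ψ'' + uψ = l₁ψ on U. Let f : U → ℂ be three times differentiable with −f'' + u f = λ f on U. Set w = ψ'/ψ, g = f' − w f, and u₁ = u − 2 w'. Then g is twice differentiable and satisfies −g'' + u₁ g = λ g on U. -/

import Mathlib

theorem stmt_12 (U : Set ℝ) (hU : IsOpen U) (u : ℝ → ℂ) (l₁ lam : ℂ) (ψ f : ℝ → ℂ)
    (hu : ∀ x ∈ U, DifferentiableAt ℝ u x)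
    (hψ1 : ∀ x ∈ U, DifferentiableAt ℝ ψ x)
    (hψ2 : ∀ x ∈ U, DifferentiableAt ℝ (deriv ψ) x)
    (hψ3 : ∀ x ∈ U, DifferentiableAt ℝ (deriv (deriv ψ)) x)
    (hψne : ∀ x ∈ U, ψ x ≠ 0)
    (hψeq : ∀ x ∈ U, -(deriv (deriv ψ) x) + u x * ψ x = l₁ * ψ x)
    (hf1 : ∀ x ∈ U, DifferentiableAt ℝ f x)
    (hf2 : ∀ x ∈ U, DifferentiableAt ℝ (deriv f) x)
    (hf3 : ∀ x ∈ U, DifferentiableAt ℝ (deriv (deriv f)) x)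
    (hfeq : ∀ x ∈ U, -(deriv (deriv f) x) + u x * f x = lam * f x) :
    (∀ x ∈ U, DifferentiableAt ℝ (fun y => deriv f y - (deriv ψ y / ψ y) * f y) x) ∧
    (∀ x ∈ U, DifferentiableAt ℝ (deriv (fun y => deriv f y - (deriv ψ y / ψ y) * f y)) x) ∧
    (∀ x ∈ U,
      -(deriv (deriv (fun y => deriv f y - (deriv ψ y / ψ y) * f y)) x)
          + (u x - 2 * deriv (fun y => deriv ψ y / ψ y) x)
            * (deriv f x - (deriv ψ x / ψ x) * f x)
        = lam * (deriv f x - (deriv ψ x / ψ x) * f x)) := by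
  have hUnb : ∀ x ∈ U, U ∈ nhds x := fun x hx => hU.mem_nhds hx
  set w : ℝ → ℂ := fun y => deriv ψ y / ψ y with hw_def
  have hw_app : ∀ y, deriv ψ y / ψ y = w y := fun y => rfl
  simp only [hw_app]
  set g : ℝ → ℂ := fun y => deriv f y - w y * f y with hg_def
  have hg_app : ∀ y, deriv f y - w y * f y = g y := fun y => rfl
  simp only [hg_app]
  -- differentiability of w
  have hw1 : ∀ x ∈ U, DifferentiableAt ℝ w x := fun x hx =>
    (hψ2 x hx).div (hψ1 x hx) (hψne x hx)
  -- ψ'' = (u - l₁) ψ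
  have hψpp : ∀ x ∈ U, deriv (deriv ψ) x = (u x - l₁) * ψ x := by
    intro x hx
    linear_combination -(hψeq x hx)
  -- w' = u - l₁ - w²
  have hw' : ∀ x ∈ U, deriv w x = u x - l₁ - w x * w x := by
    intro x hx
    have hne := hψne x hx
    rw [hw_def]
    rw [deriv_fun_div (hψ2 x hx) (hψ1 x hx) hne, hψpp x hx]
    field_simp
  have hw'ev : ∀ x ∈ U, deriv w =ᶠ[nhds x] fun y => u y - l₁ - w y * w y := fun x hx =>
    Filter.eventuallyEq_of_mem (hUnb x hx) (fun y hy => hw' y hy)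
  have hw2 : ∀ x ∈ U, DifferentiableAt ℝ (deriv w) x := by
    intro x hx
    exact (hw'ev x hx).differentiableAt_iff.mpr
      (((hu x hx).sub_const l₁).sub ((hw1 x hx).mul (hw1 x hx)))
  -- w'' = u' - 2 w w'
  have hw'' : ∀ x ∈ U, deriv (deriv w) x = deriv u x - 2 * w x * deriv w x := by
    intro x hx
    rw [(hw'ev x hx).deriv_eq]
    rw [deriv_fun_sub ((hu x hx).sub_const l₁) ((hw1 x hx).fun_mul (hw1 x hx)),
      deriv_sub_const, deriv_fun_mul (hw1 x hx) (hw1 x hx)]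
    push_cast
    ring
  -- f'' = u f - lam f
  have hfpp : ∀ x ∈ U, deriv (deriv f) x = u x * f x - lam * f x := by
    intro x hx
    linear_combination -(hfeq x hx)
  have hfppev : ∀ x ∈ U, deriv (deriv f) =ᶠ[nhds x] fun y => u y * f y - lam * f y :=
    fun x hx => Filter.eventuallyEq_of_mem (hUnb x hx) (fun y hy => hfpp y hy)
  -- f''' = u' f + u f' - lam f'
  have hf''' : ∀ x ∈ U,
      deriv (deriv (deriv f)) x = (deriv u x * f x + u x * deriv f x) - lam * deriv f x := by
    intro x hx
    rw [(hfppev x hx).deriv_eq]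
    rw [deriv_fun_sub ((hu x hx).fun_mul (hf1 x hx)) ((hf1 x hx).const_mul lam),
      deriv_fun_mul (hu x hx) (hf1 x hx), deriv_const_mul lam (hf1 x hx)]
  -- g differentiable
  have hg1 : ∀ x ∈ U, DifferentiableAt ℝ g x := by
    intro x hx
    exact (hf2 x hx).sub ((hw1 x hx).mul (hf1 x hx))
  -- g' = f'' - (w' f + w f')
  have hg' : ∀ x ∈ U, deriv g x = deriv (deriv f) x - (deriv w x * f x + w x * deriv f x) := by
    intro x hx
    rw [hg_def]
    rw [deriv_fun_sub (hf2 x hx) ((hw1 x hx).fun_mul (hf1 x hx)), deriv_fun_mul (hw1 x hx) (hf1 x hx)]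
  have hg'ev : ∀ x ∈ U,
      deriv g =ᶠ[nhds x] fun y => deriv (deriv f) y - (deriv w y * f y + w y * deriv f y) :=
    fun x hx => Filter.eventuallyEq_of_mem (hUnb x hx) (fun y hy => hg' y hy)
  have hg2 : ∀ x ∈ U, DifferentiableAt ℝ (deriv g) x := by
    intro x hx
    exact (hg'ev x hx).differentiableAt_iff.mpr
      ((hf3 x hx).sub (((hw2 x hx).mul (hf1 x hx)).add ((hw1 x hx).mul (hf2 x hx))))
  refine ⟨hg1, hg2, ?_⟩
  intro x hx
  have hgpp : deriv (deriv g) x = deriv (deriv (deriv f)) x -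
      ((deriv (deriv w) x * f x + deriv w x * deriv f x) +
       (deriv w x * deriv f x + w x * deriv (deriv f) x)) := by
    rw [(hg'ev x hx).deriv_eq]
    rw [deriv_fun_sub (hf3 x hx) (((hw2 x hx).fun_mul (hf1 x hx)).fun_add ((hw1 x hx).fun_mul (hf2 x hx))),
      deriv_fun_add ((hw2 x hx).fun_mul (hf1 x hx)) ((hw1 x hx).fun_mul (hf2 x hx)),
      deriv_fun_mul (hw2 x hx) (hf1 x hx), deriv_fun_mul (hw1 x hx) (hf2 x hx)]
  rw [hg_def]
  rw [hgpp, hf''' x hx, hw'' x hx, hw' x hx, hfpp x hx]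
  ring
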